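/- Assume the V structure. If the effects of X on C are of opposite signs across the two levels of Y, specifically p_{C=1|11} > p_{C=1|01} and p_{C=1|10} < p_{C=1|00}, then P(C=1) > 0, P(C=0) > 0, cov(X, Y | C=1) > 0, and cov(X, Y | C=0) < 0. -/

import Mathlib

open MeasureTheory ProbabilityTheory

variable {Ω : Type*} [MeasurableSpace Ω]

/-- The event that the random variable `X` takes the value `x`. -/
def ev (X : Ω → ℝ) (x : ℝ) : Set Ω := {ω | X ω = x}

/-- The probability of an event, as a real number. -/
noncomputable def pr (P : Measure Ω) (s : Set Ω) : ℝ := (P s).toReal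

/-- The conditional probability `P(s | t)`, as a real number. -/
noncomputable def cpr (P : Measure Ω) (s t : Set Ω) : ℝ := pr (P[|t]) s

/-- The covariance of two real-valued random variables. -/
noncomputable def rcov (P : Measure Ω) (X Y : Ω → ℝ) : ℝ :=
  ∫ ω, (X ω - ∫ ω', X ω' ∂P) * (Y ω - ∫ ω', Y ω' ∂P) ∂P

/-- The conditional covariance of two real-valued random variables given an event. -/
noncomputable def covCond (P : Measure Ω) (X Y : Ω → ℝ) (t : Set Ω) : ℝ :=
  rcov (P[|t]) X Y

/-- The conditional variance of a real-valued random variable given an event. -/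
noncomputable def varCond (P : Measure Ω) (X : Ω → ℝ) (t : Set Ω) : ℝ :=
  covCond P X X t

/-- A measurable `{0,1}`-valued random variable. -/
def IsBin (X : Ω → ℝ) : Prop := Measurable X ∧ ∀ ω, X ω = 0 ∨ X ω = 1

lemma ev_measurable {X : Ω → ℝ} (hX : IsBin X) (x : ℝ) : MeasurableSet (ev X x) :=
  hX.1 (measurableSet_singleton x)

lemma ev_zero_eq_compl {X : Ω → ℝ} (hX : IsBin X) : ev X 0 = (ev X 1)ᶜ := by
  ext ω
  rcases hX.2 ω with h | h <;> simp [ev, h]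

lemma bin_eq_indicator {X : Ω → ℝ} (hX : IsBin X) :
    X = (ev X 1).indicator (fun _ => (1:ℝ)) := by
  funext ω
  rcases hX.2 ω with h | h
  · rw [Set.indicator_of_notMem (by simp [ev, h]) _, h]
  · rw [Set.indicator_of_mem (by simp [ev, h]) _, h]

lemma bin_mul_eq_indicator {X Y : Ω → ℝ} (hX : IsBin X) (hY : IsBin Y) :
    (fun ω => X ω * Y ω) = (ev X 1 ∩ ev Y 1).indicator (fun _ => (1:ℝ)) := by
  funext ω
  by_cases h : ω ∈ ev X 1 ∩ ev Y 1
  · rw [Set.indicator_of_mem h]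
    simp only [ev, Set.mem_inter_iff, Set.mem_setOf_eq] at h
    rw [h.1, h.2]; ring
  · rw [Set.indicator_of_notMem h]
    simp only [ev, Set.mem_inter_iff, Set.mem_setOf_eq] at h
    rcases hX.2 ω with h1 | h1
    · rw [h1]; ring
    · rcases hY.2 ω with h2 | h2
      · rw [h2]; ring
      · exact absurd ⟨h1, h2⟩ h

lemma integrable_bin {X : Ω → ℝ} (hX : IsBin X) (μ : Measure Ω) [IsFiniteMeasure μ] :
    Integrable X μ := by
  rw [bin_eq_indicator hX]
  exact (integrable_const (1:ℝ)).indicator (ev_measurable hX 1)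

lemma integral_bin {X : Ω → ℝ} (hX : IsBin X) (μ : Measure Ω) [IsFiniteMeasure μ] :
    ∫ ω, X ω ∂μ = pr μ (ev X 1) := by
  conv_lhs => rw [bin_eq_indicator hX]
  rw [integral_indicator_const (1:ℝ) (ev_measurable hX 1)]
  simp [pr]
  rfl

lemma rcov_bin {X Y : Ω → ℝ} (hX : IsBin X) (hY : IsBin Y) (μ : Measure Ω)
    [IsProbabilityMeasure μ] :
    rcov μ X Y = pr μ (ev X 1 ∩ ev Y 1) - pr μ (ev X 1) * pr μ (ev Y 1) := by
  unfold rcov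
  set cX := ∫ ω', X ω' ∂μ with hcX
  set cY := ∫ ω', Y ω' ∂μ with hcY
  have hiX : Integrable X μ := integrable_bin hX μ
  have hiY : Integrable Y μ := integrable_bin hY μ
  have hiXY : Integrable (fun ω => X ω * Y ω) μ := by
    rw [bin_mul_eq_indicator hX hY]
    exact (integrable_const (1:ℝ)).indicator ((ev_measurable hX 1).inter (ev_measurable hY 1))
  have key : ∀ ω, (X ω - cX) * (Y ω - cY)
      = X ω * Y ω - cY * X ω - (cX * Y ω - cX * cY) := fun ω => by ring
  rw [show (fun ω => (X ω - cX) * (Y ω - cY)) = fun ω =>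
      X ω * Y ω - cY * X ω - (cX * Y ω - cX * cY) from funext key] at *
  have h1 : Integrable (fun ω => X ω * Y ω - cY * X ω) μ := hiXY.sub (hiX.const_mul cY)
  have h2 : Integrable (fun ω => cX * Y ω - cX * cY) μ :=
    (hiY.const_mul cX).sub (integrable_const _)
  have h3 : Integrable (fun ω => cY * X ω) μ := hiX.const_mul cY
  have h4 : Integrable (fun ω => cX * Y ω) μ := hiY.const_mul cX
  have h5 : Integrable (fun _ : Ω => cX * cY) μ := integrable_const _
  rw [integral_sub h1 h2, integral_sub hiXY h3, integral_sub h4 h5,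
    integral_const, integral_const_mul, integral_const_mul]
  have hXY : ∫ ω, X ω * Y ω ∂μ = pr μ (ev X 1 ∩ ev Y 1) := by
    rw [bin_mul_eq_indicator hX hY,
      integral_indicator_const (1:ℝ) ((ev_measurable hX 1).inter (ev_measurable hY 1))]
    simp [pr]
    rfl
  have hμ : μ.real Set.univ = 1 := by simp
  have hcX' : cX = pr μ (ev X 1) := integral_bin hX μ
  have hcY' : cY = pr μ (ev Y 1) := integral_bin hY μ
  rw [hXY, hμ, hcX', hcY', integral_bin hX μ, integral_bin hY μ, one_smul]
  ring

lemma pr_nonneg (P : Measure Ω) (s : Set Ω) : 0 ≤ pr P s := ENNReal.toReal_nonneg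

lemma pr_mono (P : Measure Ω) [IsFiniteMeasure P] {s t : Set Ω} (h : s ⊆ t) :
    pr P s ≤ pr P t := ENNReal.toReal_mono (measure_ne_top P t) (measure_mono h)

lemma pr_compl (P : Measure Ω) [IsProbabilityMeasure P] {s : Set Ω} (hs : MeasurableSet s) :
    pr P sᶜ = 1 - pr P s := by
  unfold pr
  rw [measure_compl hs (measure_ne_top _ _), measure_univ,
    ENNReal.toReal_sub_of_le prob_le_one ENNReal.one_ne_top]
  simp

lemma pr_split (P : Measure Ω) [IsFiniteMeasure P] (s : Set Ω) {t : Set Ω}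
    (ht : MeasurableSet t) : pr P s = pr P (s ∩ t) + pr P (s ∩ tᶜ) := by
  unfold pr
  rw [← ENNReal.toReal_add (measure_ne_top _ _) (measure_ne_top _ _), ← Set.diff_eq,
    measure_inter_add_diff s ht]

lemma cpr_eq (P : Measure Ω) {t : Set Ω} (ht : MeasurableSet t) (s : Set Ω) :
    cpr P s t = pr P (t ∩ s) / pr P t := by
  unfold cpr pr
  rw [cond_apply ht P s, ENNReal.toReal_mul, ENNReal.toReal_inv, ← div_eq_inv_mul]

set_option maxHeartbeats 1000000

/-- Corollary 2 on the sign of V-bias: under qualitative interaction of `X` and `Y` on `C`,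
V-bias is positive for one level of `C` and negative for the other. -/
theorem V_bias_sign_qualitative_interaction (P : Measure Ω) [IsProbabilityMeasure P]
    (X Y C : Ω → ℝ) (hX : IsBin X) (hY : IsBin Y) (hC : IsBin C)
    (hindep : IndepFun X Y P)
    (hX1 : 0 < pr P (ev X 1)) (hX1' : pr P (ev X 1) < 1)
    (hY1 : 0 < pr P (ev Y 1)) (hY1' : pr P (ev Y 1) < 1)
    (hq1 : cpr P (ev C 1) (ev X 1 ∩ ev Y 1) > cpr P (ev C 1) (ev X 0 ∩ ev Y 1))
    (hq0 : cpr P (ev C 1) (ev X 1 ∩ ev Y 0) < cpr P (ev C 1) (ev X 0 ∩ ev Y 0)) :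
    0 < pr P (ev C 1) ∧ 0 < pr P (ev C 0) ∧
      covCond P X Y (ev C 1) > 0 ∧ covCond P X Y (ev C 0) < 0 := by
  have mA1 := ev_measurable hX 1
  have mA0 := ev_measurable hX 0
  have mB1 := ev_measurable hY 1
  have mB0 := ev_measurable hY 0
  have mC1 := ev_measurable hC 1
  have mC0 := ev_measurable hC 0
  set a := pr P (ev X 1) with ha
  set b := pr P (ev Y 1) with hb
  -- independence in real form
  have hind : ∀ x y : ℝ, pr P (ev X x ∩ ev Y y) = pr P (ev X x) * pr P (ev Y y) := by
    intro x y
    have h := hindep.measure_inter_preimage_eq_mul (s := {x}) (t := {y})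
      (measurableSet_singleton x) (measurableSet_singleton y)
    unfold pr
    rw [show ev X x = X ⁻¹' {x} from rfl, show ev Y y = Y ⁻¹' {y} from rfl, h,
      ENNReal.toReal_mul]
  have hXc : pr P (ev X 0) = 1 - a := by rw [ev_zero_eq_compl hX, pr_compl P mA1]
  have hYc : pr P (ev Y 0) = 1 - b := by rw [ev_zero_eq_compl hY, pr_compl P mB1]
  have e11 : pr P (ev X 1 ∩ ev Y 1) = a * b := hind 1 1
  have e10 : pr P (ev X 1 ∩ ev Y 0) = a * (1 - b) := by rw [hind 1 0, hYc]
  have e01 : pr P (ev X 0 ∩ ev Y 1) = (1 - a) * b := by rw [hind 0 1, hXc]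
  have e00 : pr P (ev X 0 ∩ ev Y 0) = (1 - a) * (1 - b) := by rw [hind 0 0, hXc, hYc]
  have ha1 : 0 < 1 - a := by linarith
  have hb1 : 0 < 1 - b := by linarith
  have hs11 : 0 < a * b := mul_pos hX1 hY1
  have hs10 : 0 < a * (1 - b) := mul_pos hX1 hb1
  have hs01 : 0 < (1 - a) * b := mul_pos ha1 hY1
  have hs00 : 0 < (1 - a) * (1 - b) := mul_pos ha1 hb1
  -- the p's
  set p11 := cpr P (ev C 1) (ev X 1 ∩ ev Y 1) with hp11
  set p10 := cpr P (ev C 1) (ev X 1 ∩ ev Y 0) with hp10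
  set p01 := cpr P (ev C 1) (ev X 0 ∩ ev Y 1) with hp01
  set p00 := cpr P (ev C 1) (ev X 0 ∩ ev Y 0) with hp00
  -- the joint probabilities
  set n11 := pr P ((ev X 1 ∩ ev Y 1) ∩ ev C 1) with hn11d
  set n10 := pr P ((ev X 1 ∩ ev Y 0) ∩ ev C 1) with hn10d
  set n01 := pr P ((ev X 0 ∩ ev Y 1) ∩ ev C 1) with hn01d
  set n00 := pr P ((ev X 0 ∩ ev Y 0) ∩ ev C 1) with hn00d
  have hn11 : n11 = p11 * (a * b) := by
    rw [hp11, cpr_eq P (mA1.inter mB1), e11, div_mul_cancel₀ _ (ne_of_gt hs11)]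
  have hn10 : n10 = p10 * (a * (1 - b)) := by
    rw [hp10, cpr_eq P (mA1.inter mB0), e10, div_mul_cancel₀ _ (ne_of_gt hs10)]
  have hn01 : n01 = p01 * ((1 - a) * b) := by
    rw [hp01, cpr_eq P (mA0.inter mB1), e01, div_mul_cancel₀ _ (ne_of_gt hs01)]
  have hn00 : n00 = p00 * ((1 - a) * (1 - b)) := by
    rw [hp00, cpr_eq P (mA0.inter mB0), e00, div_mul_cancel₀ _ (ne_of_gt hs00)]
  -- nonnegativity and upper bounds
  have hp11nn : 0 ≤ p11 := pr_nonneg _ _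
  have hp10nn : 0 ≤ p10 := pr_nonneg _ _
  have hp01nn : 0 ≤ p01 := pr_nonneg _ _
  have hp00nn : 0 ≤ p00 := pr_nonneg _ _
  have hub : ∀ s t : Set Ω, pr P (s ∩ t) ≤ pr P s := fun s t =>
    pr_mono P Set.inter_subset_left
  have hp11le : p11 ≤ 1 := by
    have := hub (ev X 1 ∩ ev Y 1) (ev C 1)
    rw [← hn11d, e11] at this
    rw [hn11] at this
    exact le_of_mul_le_mul_right (by rw [one_mul]; exact this) hs11
  have hp01le : p01 ≤ 1 := by
    have := hub (ev X 0 ∩ ev Y 1) (ev C 1)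
    rw [← hn01d, e01] at this
    rw [hn01] at this
    exact le_of_mul_le_mul_right (by rw [one_mul]; exact this) hs01
  have hp00le : p00 ≤ 1 := by
    have := hub (ev X 0 ∩ ev Y 0) (ev C 1)
    rw [← hn00d, e00] at this
    rw [hn00] at this
    exact le_of_mul_le_mul_right (by rw [one_mul]; exact this) hs00
  have hp10le : p10 ≤ 1 := by
    have := hub (ev X 1 ∩ ev Y 0) (ev C 1)
    rw [← hn10d, e10] at this
    rw [hn10] at this
    exact le_of_mul_le_mul_right (by rw [one_mul]; exact this) hs10
  -- decomposition of P(C = 1)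
  have hC0c : ev C 0 = (ev C 1)ᶜ := ev_zero_eq_compl hC
  have seq : ∀ s t u : Set Ω, (s ∩ t) ∩ u = (t ∩ u) ∩ s := fun s t u => by
    ext ω; simp only [Set.mem_inter_iff]; tauto
  have hsplitC : ∀ s : Set Ω, pr P (s ∩ ev X 1) =
      pr P ((ev X 1 ∩ ev Y 1) ∩ s) + pr P ((ev X 1 ∩ ev Y 0) ∩ s) := by
    intro s
    rw [pr_split P (s ∩ ev X 1) mB1, ← ev_zero_eq_compl hY,
      show (s ∩ ev X 1) ∩ ev Y 1 = (ev X 1 ∩ ev Y 1) ∩ s from seq s (ev X 1) (ev Y 1),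
      show (s ∩ ev X 1) ∩ ev Y 0 = (ev X 1 ∩ ev Y 0) ∩ s from seq s (ev X 1) (ev Y 0)]
  have hsplitC' : ∀ s : Set Ω, pr P (s ∩ ev X 0) =
      pr P ((ev X 0 ∩ ev Y 1) ∩ s) + pr P ((ev X 0 ∩ ev Y 0) ∩ s) := by
    intro s
    rw [pr_split P (s ∩ ev X 0) mB1, ← ev_zero_eq_compl hY,
      show (s ∩ ev X 0) ∩ ev Y 1 = (ev X 0 ∩ ev Y 1) ∩ s from seq s (ev X 0) (ev Y 1),
      show (s ∩ ev X 0) ∩ ev Y 0 = (ev X 0 ∩ ev Y 0) ∩ s from seq s (ev X 0) (ev Y 0)]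
  have hsplit4 : ∀ s : Set Ω, pr P s =
      (pr P ((ev X 1 ∩ ev Y 1) ∩ s) + pr P ((ev X 1 ∩ ev Y 0) ∩ s))
      + (pr P ((ev X 0 ∩ ev Y 1) ∩ s) + pr P ((ev X 0 ∩ ev Y 0) ∩ s)) := by
    intro s
    rw [pr_split P s mA1, ← ev_zero_eq_compl hX, hsplitC s, hsplitC' s]
  have hT : pr P (ev C 1) = (n11 + n10) + (n01 + n00) := hsplit4 (ev C 1)
  -- positivity of P(C=1)
  have hp11pos : 0 < p11 := lt_of_le_of_lt hp01nn hq1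
  have hn11pos : 0 < n11 := by rw [hn11]; exact mul_pos hp11pos hs11
  have hn10nn : 0 ≤ n10 := pr_nonneg _ _
  have hn01nn : 0 ≤ n01 := pr_nonneg _ _
  have hn00nn : 0 ≤ n00 := pr_nonneg _ _
  have hTpos : 0 < pr P (ev C 1) := by rw [hT]; linarith
  -- positivity of P(C=0)
  have hp01lt1 : p01 < 1 := lt_of_lt_of_le hq1 hp11le
  have hU : pr P (ev C 0) = 1 - pr P (ev C 1) := by rw [hC0c, pr_compl P mC1]
  -- m's
  set m11 := pr P ((ev X 1 ∩ ev Y 1) ∩ ev C 0) with hm11d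
  set m10 := pr P ((ev X 1 ∩ ev Y 0) ∩ ev C 0) with hm10d
  set m01 := pr P ((ev X 0 ∩ ev Y 1) ∩ ev C 0) with hm01d
  set m00 := pr P ((ev X 0 ∩ ev Y 0) ∩ ev C 0) with hm00d
  have hmsplit : ∀ s : Set Ω, pr P (s ∩ ev C 1) + pr P (s ∩ ev C 0) = pr P s := by
    intro s
    rw [hC0c, ← pr_split P s mC1]
  have hm11 : m11 = (1 - p11) * (a * b) := by
    have := hmsplit (ev X 1 ∩ ev Y 1); rw [e11, ← hn11d, ← hm11d, hn11] at this; linarith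
  have hm10 : m10 = (1 - p10) * (a * (1 - b)) := by
    have := hmsplit (ev X 1 ∩ ev Y 0); rw [e10, ← hn10d, ← hm10d, hn10] at this; linarith
  have hm01 : m01 = (1 - p01) * ((1 - a) * b) := by
    have := hmsplit (ev X 0 ∩ ev Y 1); rw [e01, ← hn01d, ← hm01d, hn01] at this; linarith
  have hm00 : m00 = (1 - p00) * ((1 - a) * (1 - b)) := by
    have := hmsplit (ev X 0 ∩ ev Y 0); rw [e00, ← hn00d, ← hm00d, hn00] at this; linarith
  have hUm : pr P (ev C 0) = (m11 + m10) + (m01 + m00) := hsplit4 (ev C 0)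
  have hm01pos : 0 < m01 := by rw [hm01]; exact mul_pos (by linarith) hs01
  have hm11nn : 0 ≤ m11 := pr_nonneg _ _
  have hm10nn : 0 ≤ m10 := pr_nonneg _ _
  have hm00nn : 0 ≤ m00 := pr_nonneg _ _
  have hUpos : 0 < pr P (ev C 0) := by rw [hUm]; linarith
  refine ⟨hTpos, hUpos, ?_, ?_⟩
  -- conditional covariance formula, generic in the conditioning event
  · -- cov given C = 1
    have hC1ne : P (ev C 1) ≠ 0 := by
      intro h; rw [pr, h] at hTpos; simp at hTpos
    haveI : IsProbabilityMeasure (P[|ev C 1]) := cond_isProbabilityMeasure hC1ne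
    have hcov : covCond P X Y (ev C 1)
        = pr (P[|ev C 1]) (ev X 1 ∩ ev Y 1)
          - pr (P[|ev C 1]) (ev X 1) * pr (P[|ev C 1]) (ev Y 1) := rcov_bin hX hY _
    have h1 : pr (P[|ev C 1]) (ev X 1 ∩ ev Y 1) = n11 / pr P (ev C 1) := by
      show cpr P (ev X 1 ∩ ev Y 1) (ev C 1) = _
      rw [cpr_eq P mC1, hn11d,
        show ev C 1 ∩ (ev X 1 ∩ ev Y 1) = (ev X 1 ∩ ev Y 1) ∩ ev C 1 from Set.inter_comm _ _]
    have h2 : pr (P[|ev C 1]) (ev X 1) = (n11 + n10) / pr P (ev C 1) := by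
      show cpr P (ev X 1) (ev C 1) = _
      rw [cpr_eq P mC1, hsplitC (ev C 1), hn11d, hn10d]
    have h3 : pr (P[|ev C 1]) (ev Y 1) = (n11 + n01) / pr P (ev C 1) := by
      show cpr P (ev Y 1) (ev C 1) = _
      rw [cpr_eq P mC1, pr_split P (ev C 1 ∩ ev Y 1) mA1, ← ev_zero_eq_compl hX,
        show (ev C 1 ∩ ev Y 1) ∩ ev X 1 = (ev X 1 ∩ ev Y 1) ∩ ev C 1 from by
          ext ω; simp only [Set.mem_inter_iff]; tauto,
        show (ev C 1 ∩ ev Y 1) ∩ ev X 0 = (ev X 0 ∩ ev Y 1) ∩ ev C 1 from by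
          ext ω; simp only [Set.mem_inter_iff]; tauto, hn11d, hn01d]
    have key : 0 < n11 * n00 - n10 * n01 := by
      have hpp : p10 * p01 < p11 * p00 := by
        have t1 := mul_pos (lt_of_le_of_lt hp10nn hq0) (sub_pos.2 hq1)
        have t2 := mul_nonneg hp01nn (le_of_lt (sub_pos.2 hq0))
        linarith [t1, t2]
      have h2 : n11 * n00 - n10 * n01
          = (p11 * p00 - p10 * p01) * ((a * b) * ((1 - a) * (1 - b))) := by
        rw [hn11, hn10, hn01, hn00]; ring
      rw [h2]
      exact mul_pos (sub_pos.2 hpp) (mul_pos hs11 hs00)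
    rw [hcov, h1, h2, h3]
    have heq : n11 / pr P (ev C 1)
        - (n11 + n10) / pr P (ev C 1) * ((n11 + n01) / pr P (ev C 1))
        = (n11 * n00 - n10 * n01) / (pr P (ev C 1) * pr P (ev C 1)) := by
      rw [hT]
      field_simp
      ring
    rw [heq]
    exact div_pos key (mul_pos hTpos hTpos)
  · -- cov given C = 0
    have hC0ne : P (ev C 0) ≠ 0 := by
      intro h; rw [pr, h] at hUpos; simp at hUpos
    haveI : IsProbabilityMeasure (P[|ev C 0]) := cond_isProbabilityMeasure hC0ne
    have hcov : covCond P X Y (ev C 0)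
        = pr (P[|ev C 0]) (ev X 1 ∩ ev Y 1)
          - pr (P[|ev C 0]) (ev X 1) * pr (P[|ev C 0]) (ev Y 1) := rcov_bin hX hY _
    have h1 : pr (P[|ev C 0]) (ev X 1 ∩ ev Y 1) = m11 / pr P (ev C 0) := by
      show cpr P (ev X 1 ∩ ev Y 1) (ev C 0) = _
      rw [cpr_eq P mC0, hm11d,
        show ev C 0 ∩ (ev X 1 ∩ ev Y 1) = (ev X 1 ∩ ev Y 1) ∩ ev C 0 from Set.inter_comm _ _]
    have h2 : pr (P[|ev C 0]) (ev X 1) = (m11 + m10) / pr P (ev C 0) := by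
      show cpr P (ev X 1) (ev C 0) = _
      rw [cpr_eq P mC0, hsplitC (ev C 0), hm11d, hm10d]
    have h3 : pr (P[|ev C 0]) (ev Y 1) = (m11 + m01) / pr P (ev C 0) := by
      show cpr P (ev Y 1) (ev C 0) = _
      rw [cpr_eq P mC0, pr_split P (ev C 0 ∩ ev Y 1) mA1, ← ev_zero_eq_compl hX,
        show (ev C 0 ∩ ev Y 1) ∩ ev X 1 = (ev X 1 ∩ ev Y 1) ∩ ev C 0 from by
          ext ω; simp only [Set.mem_inter_iff]; tauto,
        show (ev C 0 ∩ ev Y 1) ∩ ev X 0 = (ev X 0 ∩ ev Y 1) ∩ ev C 0 from by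
          ext ω; simp only [Set.mem_inter_iff]; tauto, hm11d, hm01d]
    have key : m11 * m00 - m10 * m01 < 0 := by
      have hpp : (1 - p11) * (1 - p00) < (1 - p10) * (1 - p01) := by
        have t1 := mul_pos (show (0:ℝ) < 1 - p01 by linarith) (sub_pos.2 hq0)
        have t2 := mul_nonneg (show (0:ℝ) ≤ 1 - p00 by linarith)
          (le_of_lt (sub_pos.2 hq1))
        linarith [t1, t2]
      have h2 : m11 * m00 - m10 * m01
          = ((1 - p11) * (1 - p00) - (1 - p10) * (1 - p01))
            * ((a * b) * ((1 - a) * (1 - b))) := by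
        rw [hm11, hm10, hm01, hm00]; ring
      rw [h2]
      exact mul_neg_of_neg_of_pos (by linarith) (mul_pos hs11 hs00)
    rw [hcov, h1, h2, h3]
    have heq : m11 / pr P (ev C 0)
        - (m11 + m10) / pr P (ev C 0) * ((m11 + m01) / pr P (ev C 0))
        = (m11 * m00 - m10 * m01) / (pr P (ev C 0) * pr P (ev C 0)) := by
      rw [hUm]
      field_simp
      ring
    rw [heq]
    exact div_neg_of_neg_of_pos key (mul_pos hUpos hUpos)
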